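/- Let g be a finite-dimensional nilpotent real Lie algebra of dimension at least 4 with symplectic form θ, let ∇ be the symplectic affine structure on g, let g̃ = g ⊕ ℝ be the one-dimensional central extension, and let ∇̃ be a bilinear map on g̃ satisfying conditions (*) with φ = θ/2. If ∇̃ is an affine structure on the Lie algebra g̃, then: (1) π(∇̃((X,0),(0,1))) = 0 for all X ∈ g, so that ∇̃((X,0),(0,1)) = (0, a_X) where a : X ↦ a_X is a linear form on g; (2) ∇̃((0,1),(0,1)) = 0; (3) a_{[X,Y]} = 0 for all X, Y ∈ g, i.e. a is a one-dimensional linear representation of g; and (4) θ([X,Y],Z) + θ(Y,Z)·a_X − θ(X,Z)·a_Y − 2θ(X,Y)·a_Z = 0 for all X, Y, Z ∈ g. -/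

import Mathlib

/-- (Case `φ = θ/2`.)  Let `g` be nilpotent of dimension ≥ 4 with symplectic
form `θ` and symplectic affine structure `∇`; let `∇̃` satisfy conditions (*) with `φ = θ/2` on
the central extension `g̃ = g ⊕ ℝ`.  If `∇̃` is an affine structure on `g̃`, then
`π(∇̃((X,0),(0,1))) = 0` (so `∇̃((X,0),(0,1)) = (0,a_X)` with `a` a linear form),
`∇̃((0,1),(0,1)) = 0`, `a` kills all brackets (it is a one-dimensional representation), and
`θ([X,Y],Z) + θ(Y,Z)a_X − θ(X,Z)a_Y − 2θ(X,Y)a_Z = 0` for all `X, Y, Z`. -/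
theorem case_phi_eq_half_theta
    (L : Type*) [LieRing L] [LieAlgebra ℝ L] [FiniteDimensional ℝ L]
    [LieRing.IsNilpotent L]
    (hdim : 4 ≤ Module.finrank ℝ L)
    (θ : L →ₗ[ℝ] L →ₗ[ℝ] ℝ)
    (halt : ∀ X : L, θ X X = 0)
    (hnondeg : ∀ X : L, (∀ Y : L, θ X Y = 0) → X = 0)
    (hcocycle : ∀ X Y Z : L, θ ⁅X, Y⁆ Z + θ ⁅Y, Z⁆ X + θ ⁅Z, X⁆ Y = 0)
    (D : L →ₗ[ℝ] L →ₗ[ℝ] L)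
    (hD : ∀ X Y Z : L, θ (D X Y) Z = -θ Y ⁅X, Z⁆)
    (Dt : (L × ℝ) →ₗ[ℝ] (L × ℝ) →ₗ[ℝ] (L × ℝ))
    (hstar1 : ∀ X Y : L, Dt (X, (0 : ℝ)) (Y, (0 : ℝ)) = (D X Y, θ X Y / 2))
    (hstar2 : ∀ (X : L) (lam : ℝ), Dt (X, (0 : ℝ)) ((0 : L), lam) = Dt ((0 : L), lam) (X, (0 : ℝ)))
    (htorsion : ∀ U V : L × ℝ, Dt U V - Dt V U = (⁅U.1, V.1⁆, θ U.1 V.1))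
    (hflat : ∀ U V W : L × ℝ,
      Dt U (Dt V W) - Dt V (Dt U W) = Dt (⁅U.1, V.1⁆, θ U.1 V.1) W) :
    ∃ a : L →ₗ[ℝ] ℝ,
      (∀ X : L, Dt (X, (0 : ℝ)) ((0 : L), (1 : ℝ)) = ((0 : L), a X)) ∧
      Dt ((0 : L), (1 : ℝ)) ((0 : L), (1 : ℝ)) = 0 ∧
      (∀ X Y : L, a ⁅X, Y⁆ = 0) ∧
      (∀ X Y Z : L, θ ⁅X, Y⁆ Z + θ Y Z * a X - θ X Z * a Y - 2 * θ X Y * a Z = 0) := by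
  -- antisymmetry of θ
  have θanti : ∀ X Y : L, θ X Y = -θ Y X := by
    intro X Y
    have h := halt (X + Y)
    simp only [map_add, LinearMap.add_apply, halt] at h
    linarith
  -- consequences of hD
  have hD2 : ∀ X Y Z : L, θ X (D Y Z) = -θ Z ⁅X, Y⁆ := by
    intro X Y Z
    have h1 := hD Y Z X
    have h2 := θanti X (D Y Z)
    have h3 : θ Z ⁅Y, X⁆ = -θ Z ⁅X, Y⁆ := by
      rw [← lie_skew X Y, map_neg, neg_neg]
    rw [h2, h1]; linarith
  -- left symmetry of D
  have leftsym : ∀ X Y Z : L, D X (D Y Z) - D Y (D X Z) = D ⁅X, Y⁆ Z := by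
    intro X Y Z
    have h : D X (D Y Z) - D Y (D X Z) - D ⁅X, Y⁆ Z = 0 := by
      apply hnondeg
      intro W
      have e1 := hD X (D Y Z) W
      have e2 := hD Y Z ⁅X, W⁆
      have e3 := hD Y (D X Z) W
      have e4 := hD X Z ⁅Y, W⁆
      have e5 := hD ⁅X, Y⁆ Z W
      have ej : θ Z ⁅⁅X, Y⁆, W⁆ = θ Z ⁅X, ⁅Y, W⁆⁆ - θ Z ⁅Y, ⁅X, W⁆⁆ := by
        rw [lie_lie, map_sub]
      simp only [map_sub, LinearMap.sub_apply]
      linarith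
    exact sub_eq_zero.mp h
  -- components of Dt (X,0) (0,1) and Dt (0,1) (0,1)
  set b : L → L := fun X => (Dt (X, (0 : ℝ)) ((0 : L), (1 : ℝ))).1 with hbdef
  set a0 : L → ℝ := fun X => (Dt (X, (0 : ℝ)) ((0 : L), (1 : ℝ))).2 with ha0def
  set c : L := (Dt ((0 : L), (1 : ℝ)) ((0 : L), (1 : ℝ))).1 with hcdef
  set d : ℝ := (Dt ((0 : L), (1 : ℝ)) ((0 : L), (1 : ℝ))).2 with hddef
  have hBa : ∀ X : L, Dt (X, (0 : ℝ)) ((0 : L), (1 : ℝ)) = (b X, a0 X) := by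
    intro X; rw [hbdef, ha0def]
  have hcd : Dt ((0 : L), (1 : ℝ)) ((0 : L), (1 : ℝ)) = (c, d) := by
    rw [hcdef, hddef]
  have epair : ∀ (X : L) (lam : ℝ),
      ((X, lam) : L × ℝ) = (X, (0 : ℝ)) + lam • ((0 : L), (1 : ℝ)) := by
    intro X lam
    simp [Prod.smul_mk, Prod.mk_add_mk]
  -- master expansion
  have keyc : ∀ (X : L) (lam : ℝ) (Y : L) (mu : ℝ),
      Dt (X, lam) (Y, mu) =
        (D X Y + mu • b X + lam • b Y + (lam * mu) • c,
         θ X Y / 2 + mu * a0 X + lam * a0 Y + lam * mu * d) := by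
    intro X lam Y mu
    conv_lhs => rw [epair X lam, epair Y mu]
    simp only [map_add, map_smul, LinearMap.add_apply, LinearMap.smul_apply]
    rw [hstar1, ← hstar2 Y 1, hBa, hBa, hcd]
    simp only [Prod.smul_mk, Prod.mk_add_mk, smul_eq_mul, Prod.mk.injEq]
    constructor
    · module
    · ring
  have hb00 : b 0 = 0 := by
    have h0 : ((0 : L), (0 : ℝ)) = (0 : L × ℝ) := rfl
    rw [hbdef]; simp only [h0, map_zero, LinearMap.zero_apply, Prod.fst_zero]
  have ha00 : a0 0 = 0 := by
    have h0 : ((0 : L), (0 : ℝ)) = (0 : L × ℝ) := rfl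
    rw [ha0def]; simp only [h0, map_zero, LinearMap.zero_apply, Prod.snd_zero]
  -- flatness instance I1 : (X,0),(Y,0),(Z,0)
  have I1 : ∀ X Y Z : L,
      (D X (D Y Z) + (θ Y Z / 2) • b X - (D Y (D X Z) + (θ X Z / 2) • b Y)
        = D ⁅X, Y⁆ Z + θ X Y • b Z) ∧
      (θ X (D Y Z) / 2 + θ Y Z / 2 * a0 X - (θ Y (D X Z) / 2 + θ X Z / 2 * a0 Y)
        = θ ⁅X, Y⁆ Z / 2 + θ X Y * a0 Z) := by
    intro X Y Z
    have h := hflat (X, (0 : ℝ)) (Y, (0 : ℝ)) (Z, (0 : ℝ))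
    simp only [keyc, halt, hb00, ha00, zero_smul, smul_zero, add_zero, zero_add,
      mul_zero, zero_mul, one_mul, mul_one, one_smul, map_zero, LinearMap.zero_apply,
      lie_zero, zero_lie, Prod.mk_sub_mk, Prod.mk.injEq] at h
    exact h
  -- b vanishes
  have hker : ∀ X Y : L, θ X Y • b X = 0 := by
    intro X Y
    have h := (I1 X Y X).1
    rw [halt X, θanti Y X] at h
    linear_combination (norm := module) ((-2/3 : ℝ)) • (h - leftsym X Y X)
  have hb : ∀ X : L, b X = 0 := by
    intro X
    by_cases hX : ∀ Y : L, θ X Y = 0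
    · rw [hnondeg X hX]; exact hb00
    · push_neg at hX
      obtain ⟨Y, hY⟩ := hX
      exact (smul_eq_zero.mp (hker X Y)).resolve_left hY
  -- statement (4)
  have stmt4 : ∀ X Y Z : L,
      θ ⁅X, Y⁆ Z + θ Y Z * a0 X - θ X Z * a0 Y - 2 * θ X Y * a0 Z = 0 := by
    intro X Y Z
    have h := (I1 X Y Z).2
    have e1 := hD2 X Y Z
    have e2 := hD2 Y X Z
    have e3 := θanti Z ⁅X, Y⁆
    have hq : θ Z ⁅Y, X⁆ = -θ Z ⁅X, Y⁆ := by
      rw [← lie_skew X Y, map_neg, neg_neg]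
    linarith
  -- flatness instance I2 : (X,0), e, e  gives c = 0
  have hc : c = 0 := by
    have key2 : ∀ X : L, θ X c = 0 := by
      intro X
      have h := hflat (X, (0 : ℝ)) ((0 : L), (1 : ℝ)) ((0 : L), (1 : ℝ))
      rw [hcd] at h
      simp only [keyc, hb, hb00, ha00, halt, zero_smul, smul_zero, add_zero, zero_add,
        mul_zero, zero_mul, one_mul, mul_one, one_smul, map_zero, LinearMap.zero_apply,
        lie_zero, zero_lie, Prod.mk_sub_mk, Prod.mk.injEq] at h
      linarith [h.2]
    apply hnondeg
    intro Y
    rw [θanti c Y, key2 Y, neg_zero]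
  -- flatness instance I3 : (X,0),(Y,0), e
  have EqC : ∀ X Y : L, a0 ⁅X, Y⁆ + θ X Y * d = 0 := by
    intro X Y
    have h := hflat (X, (0 : ℝ)) (Y, (0 : ℝ)) ((0 : L), (1 : ℝ))
    rw [hBa X, hBa Y] at h
    simp only [keyc, hb, hc, hb00, ha00, halt, zero_smul, smul_zero, add_zero, zero_add,
      mul_zero, zero_mul, one_mul, mul_one, one_smul, map_zero, LinearMap.zero_apply,
      lie_zero, zero_lie, Prod.mk_sub_mk, Prod.mk.injEq] at h
    linarith [h.2]
  -- d = 0 using nilpotency (nontrivial center)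
  have hd : d = 0 := by
    by_contra hd0
    have : Nontrivial L := by
      have h1 : 0 < Module.finrank ℝ L := by omega
      exact Module.nontrivial_of_finrank_pos h1
    haveI hcen : Nontrivial (LieAlgebra.center ℝ L) :=
      LieAlgebra.non_trivial_center_of_isNilpotent
    obtain ⟨z, hz⟩ := exists_ne (0 : LieAlgebra.center ℝ L)
    have hzc : ∀ Y : L, ⁅(z : L), Y⁆ = 0 := by
      intro Y
      have := (LieModule.mem_maxTrivSubmodule ℝ L L (z : L)).mp z.2 Y
      rw [← lie_skew, this, neg_zero]
    have hzθ : ∀ Y : L, θ (z : L) Y = 0 := by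
      intro Y
      have h := EqC (z : L) Y
      rw [hzc Y, ha00] at h
      have := mul_eq_zero.mp (by linarith : θ (z : L) Y * d = 0)
      exact this.resolve_right hd0
    have : (z : L) = 0 := hnondeg _ hzθ
    exact hz (Subtype.ext this)
  have ha_brk : ∀ X Y : L, a0 ⁅X, Y⁆ = 0 := by
    intro X Y
    have := EqC X Y
    rw [hd] at this
    linarith
  -- a0 is linear
  refine ⟨(LinearMap.snd ℝ L ℝ).comp ((Dt.flip ((0 : L), (1 : ℝ))).comp (LinearMap.inl ℝ L ℝ)),
    ?_, ?_, ?_, ?_⟩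
  · intro X
    have haX : (LinearMap.snd ℝ L ℝ).comp
        ((Dt.flip ((0 : L), (1 : ℝ))).comp (LinearMap.inl ℝ L ℝ)) X = a0 X := by
      simp [LinearMap.flip_apply, ha0def]
    rw [haX, hBa X, hb X]
  · rw [hcd, hc, hd]; rfl
  · intro X Y
    have haX : (LinearMap.snd ℝ L ℝ).comp
        ((Dt.flip ((0 : L), (1 : ℝ))).comp (LinearMap.inl ℝ L ℝ)) ⁅X, Y⁆ = a0 ⁅X, Y⁆ := by
      simp [LinearMap.flip_apply, ha0def]
    rw [haX]; exact ha_brk X Y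
  · intro X Y Z
    have haX : ∀ W : L, (LinearMap.snd ℝ L ℝ).comp
        ((Dt.flip ((0 : L), (1 : ℝ))).comp (LinearMap.inl ℝ L ℝ)) W = a0 W := by
      intro W; simp [LinearMap.flip_apply, ha0def]
    rw [haX, haX, haX]; exact stmt4 X Y Z
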